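/- Let h : S¹ → S¹ be an orientation-preserving homeomorphism with h(ℤ[1/2]) ⊆ ℤ[1/2], and assume that h ∘ ν₂ ∘ h⁻¹ is an everywhere-defined element of T̄_{2,1}. Then h · T_{2,1} · h⁻¹ ⊆ T_{2,1}. -/

import Mathlib

noncomputable section

/-- `ℤ[1/n]` realized as a subset of `ℝ`: all reals of the form `a * n^b` with `a b : ℤ`. -/
def zpows (n : ℕ) : Set ℝ := {x : ℝ | ∃ a b : ℤ, x = (a : ℝ) * (n : ℝ) ^ b}

/-- The defining properties of the (unique) ring homomorphism `φₙ : ℤ[1/n] → ℤ/(n-1)ℤ`,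
expressed for a function `φ : ℝ → ZMod (n-1)` restricted to the subset `zpows n`. -/
def IsPhi (n : ℕ) (φ : ℝ → ZMod (n - 1)) : Prop :=
  (∀ x ∈ zpows n, ∀ y ∈ zpows n, φ (x + y) = φ x + φ y) ∧
  (∀ x ∈ zpows n, ∀ y ∈ zpows n, φ (x * y) = φ x * φ y) ∧
  φ 1 = 1

/-- Piecewise linearity data on the circle `ℝ/rℤ`, expressed for an `r`-periodic lift
`F : ℝ → ℝ`: there is an `r`-periodic break set `B ⊆ ℤ[1/n]`, finite in each period,
off which `F` is locally affine with slopes integral powers of `n`. -/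
def CircPL (n : ℕ) (r : ℝ) (F : ℝ → ℝ) : Prop :=
  ∃ B : Set ℝ,
    (B ∩ Set.Ico (0 : ℝ) r).Finite ∧ (∀ x ∈ B, x + r ∈ B ∧ x - r ∈ B) ∧ B ⊆ zpows n ∧
    ∀ x ∉ B, ∃ (k : ℤ) (c : ℝ), ∃ ε > 0, ∀ y : ℝ, |y - x| < ε → F y = (n : ℝ) ^ k * y + c

/-- Membership in `T_{n,r}`: an orientation-preserving homeomorphism of the circle
`S_r = ℝ/rℤ` (encoded by a strictly monotone surjective lift commuting with `x ↦ x + r`),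
piecewise linear with finitely many breaks, all breaks in `ℤ[1/n]`, all slopes integral
powers of `n`, and mapping (the image of) `ℤ[1/n]` into itself. -/
def MemT (n : ℕ) (r : ℝ) (f : AddCircle r → AddCircle r) : Prop :=
  ∃ F : ℝ → ℝ,
    (∀ x : ℝ, f (x : AddCircle r) = ((F x : ℝ) : AddCircle r)) ∧
    (∀ x : ℝ, F (x + r) = F x + r) ∧
    StrictMono F ∧ Function.Surjective F ∧ CircPL n r F ∧
    (∀ q ∈ zpows n, F q ∈ zpows n)

/-- An everywhere-defined element of `T̄_{n,r}`: a continuous, locally orientation-preserving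
local homeomorphism of the circle `S_r` (encoded by a strictly monotone continuous lift `G`
with `G (x + r) = G x + d·r` for some degree `d ≥ 1`), piecewise linear with finitely many
breaks, all breaks in `ℤ[1/n]`, all slopes integral powers of `n`, and mapping `ℤ[1/n]`
into itself. -/
def MemTbar (n : ℕ) (r : ℝ) (g : AddCircle r → AddCircle r) : Prop :=
  ∃ (G : ℝ → ℝ) (d : ℕ), 0 < d ∧
    (∀ x : ℝ, g (x : AddCircle r) = ((G x : ℝ) : AddCircle r)) ∧
    (∀ x : ℝ, G (x + r) = G x + (d : ℝ) * r) ∧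
    StrictMono G ∧ Continuous G ∧ CircPL n r G ∧
    (∀ q ∈ zpows n, G q ∈ zpows n)

/-- An orientation-preserving homeomorphism of the circle `S_r`, encoded by the existence
of a strictly monotone surjective lift commuting with `x ↦ x + r`. -/
def OrientedHomeo (r : ℝ) (h : AddCircle r → AddCircle r) : Prop :=
  ∃ H : ℝ → ℝ,
    (∀ x : ℝ, h (x : AddCircle r) = ((H x : ℝ) : AddCircle r)) ∧
    (∀ x : ℝ, H (x + r) = H x + r) ∧
    StrictMono H ∧ Function.Surjective H

/-- The doubling map `ν₂ : S¹ → S¹`, `x ↦ 2x (mod 1)`. -/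
def nu2 : AddCircle (1 : ℝ) → AddCircle (1 : ℝ) := fun z => z + z

/-- The image of the dyadic rationals `ℤ[1/2]` in the circle `S¹ = ℝ/ℤ`. -/
def dyadicCircle : Set (AddCircle (1 : ℝ)) :=
  {z : AddCircle (1 : ℝ) | ∃ q ∈ zpows 2, z = ((q : ℝ) : AddCircle (1 : ℝ))}

namespace St18

lemma Z_def {x : ℝ} : x ∈ zpows 2 ↔ ∃ a b : ℤ, x = (a : ℝ) * (2 : ℝ) ^ b := by
  unfold zpows; norm_num

lemma Z_int (n : ℤ) : (n : ℝ) ∈ zpows 2 :=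
  Z_def.2 ⟨n, 0, by simp⟩

lemma Z_zero : (0 : ℝ) ∈ zpows 2 := by simpa using Z_int 0
lemma Z_one : (1 : ℝ) ∈ zpows 2 := by simpa using Z_int 1

lemma zpow_split {b m : ℤ} (h : m ≤ b) : (2:ℝ) ^ b = 2 ^ ((b - m).toNat) * 2 ^ m := by
  rw [← zpow_natCast (2:ℝ) (b-m).toNat, ← zpow_add₀ (by norm_num : (2:ℝ) ≠ 0)]
  congr 1; omega

lemma Z_add {x y : ℝ} (hx : x ∈ zpows 2) (hy : y ∈ zpows 2) : x + y ∈ zpows 2 := by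
  obtain ⟨a, b, rfl⟩ := Z_def.1 hx
  obtain ⟨a', b', rfl⟩ := Z_def.1 hy
  set m := min b b' with hm
  refine Z_def.2 ⟨a * 2 ^ (b - m).toNat + a' * 2 ^ (b' - m).toNat, m, ?_⟩
  rw [zpow_split (min_le_left b b'), zpow_split (min_le_right b b')]
  push_cast
  ring

lemma Z_neg {x : ℝ} (hx : x ∈ zpows 2) : -x ∈ zpows 2 := by
  obtain ⟨a, b, rfl⟩ := Z_def.1 hx
  exact Z_def.2 ⟨-a, b, by push_cast; ring⟩

lemma Z_sub {x y : ℝ} (hx : x ∈ zpows 2) (hy : y ∈ zpows 2) : x - y ∈ zpows 2 := by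
  simpa [sub_eq_add_neg] using Z_add hx (Z_neg hy)

lemma Z_mul {x y : ℝ} (hx : x ∈ zpows 2) (hy : y ∈ zpows 2) : x * y ∈ zpows 2 := by
  obtain ⟨a, b, rfl⟩ := Z_def.1 hx
  obtain ⟨a', b', rfl⟩ := Z_def.1 hy
  refine Z_def.2 ⟨a * a', b + b', ?_⟩
  rw [zpow_add₀ (by norm_num : (2:ℝ) ≠ 0)]
  push_cast; ring

lemma Z_zpow (k : ℤ) : (2 : ℝ) ^ k ∈ zpows 2 := Z_def.2 ⟨1, k, by simp⟩

lemma Z_zpow_mul {x : ℝ} (k : ℤ) (hx : x ∈ zpows 2) : (2 : ℝ) ^ k * x ∈ zpows 2 :=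
  Z_mul (Z_zpow k) hx

lemma Z_dense (x ε : ℝ) (hε : 0 < ε) : ∃ q ∈ zpows 2, |q - x| < ε := by
  obtain ⟨n, hn⟩ := pow_unbounded_of_one_lt (1/ε) (one_lt_two (α := ℝ))
  refine ⟨(⌈x * 2 ^ n⌉ : ℤ) * (2:ℝ) ^ (-(n:ℤ)), Z_def.2 ⟨⌈x * 2 ^ n⌉, -(n:ℤ), rfl⟩, ?_⟩
  have h2n : (0:ℝ) < 2 ^ n := by positivity
  have hceil₁ : x * 2 ^ n ≤ (⌈x * 2 ^ n⌉ : ℝ) := Int.le_ceil _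
  have hceil₂ : (⌈x * 2 ^ n⌉ : ℝ) < x * 2 ^ n + 1 := Int.ceil_lt_add_one _
  have hzp : (2:ℝ) ^ (-(n:ℤ)) = 1 / 2 ^ n := by
    rw [zpow_neg, zpow_natCast]; ring
  rw [hzp, abs_lt]
  constructor
  · rw [neg_lt, neg_sub]
    calc x - (⌈x * 2 ^ n⌉ : ℝ) * (1 / 2 ^ n) ≤ x - (x * 2^n) * (1/2^n) := by
          have := mul_le_mul_of_nonneg_right hceil₁ (le_of_lt (by positivity : (0:ℝ) < 1/2^n))
          linarith
      _ = 0 := by field_simp; ring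
      _ < ε := hε
  · have h1 : (⌈x * 2 ^ n⌉ : ℝ) * (1 / 2 ^ n) < (x * 2^n + 1) * (1/2^n) :=
      mul_lt_mul_of_pos_right hceil₂ (by positivity)
    have h2 : (x * 2^n + 1) * (1/2^n) = x + 1/2^n := by field_simp
    have h3 : (1:ℝ)/2^n < ε := by
      rw [div_lt_iff₀ h2n]
      calc (1:ℝ) = ε * (1/ε) := by field_simp
        _ < ε * 2^n := by
          exact mul_lt_mul_of_pos_left hn hε
    linarith

/-- Locally affine at `x` with slope a power of 2 and dyadic constant. -/
def NiceAt (F : ℝ → ℝ) (x : ℝ) : Prop :=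
  ∃ k : ℤ, ∃ c ∈ zpows 2, ∃ ε > 0, ∀ y : ℝ, |y - x| < ε → F y = (2:ℝ) ^ k * y + c

lemma affine_data_eq {k k' : ℤ} {c c' x ε : ℝ} (hε : 0 < ε)
    (h : ∀ y : ℝ, |y - x| < ε → (2:ℝ) ^ k * y + c = (2:ℝ) ^ k' * y + c') :
    k = k' ∧ c = c' := by
  have h1 := h x (by simpa using hε)
  have h2 := h (x + ε/2) (by rw [abs_of_nonneg] <;> [skip; linarith]; · linarith)
  have hk : (2:ℝ) ^ k = 2 ^ k' := by
    have : (2:ℝ) ^ k * (ε/2) = 2 ^ k' * (ε/2) := by linarith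
    have hε2 : ε/2 ≠ 0 := by positivity
    exact mul_right_cancel₀ hε2 this
  have hkk : k = k' := (zpow_right_strictMono₀ (one_lt_two (α := ℝ))).injective hk
  constructor
  · exact hkk
  · rw [hk] at h1; linarith

end St18

namespace St18

/-- A "nice map": strictly monotone continuous self-map of `ℝ` commuting with integer
translations up to degree `e`, piecewise linear with locally finite dyadic breaks,
power-of-2 slopes, dyadic constants, preserving dyadics. -/
structure NM where
  F : ℝ → ℝ
  mono : StrictMono F
  cont : Continuous F
  e : ℤ
  epos : 1 ≤ e
  per : ∀ x, F (x + 1) = F x + e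
  bad : Set ℝ
  badFin : ∀ a b : ℝ, (bad ∩ Set.Icc a b).Finite
  badPer : ∀ x ∈ bad, x + 1 ∈ bad ∧ x - 1 ∈ bad
  badZ : bad ⊆ zpows 2
  nice : ∀ x ∉ bad, NiceAt F x
  mapsZ : ∀ q ∈ zpows 2, F q ∈ zpows 2

namespace NM

variable (M : NM)

lemma perInt : ∀ (n : ℤ) (x : ℝ), M.F (x + n) = M.F x + n * M.e := by
  intro n
  induction n using Int.induction_on with
  | zero => simp
  | succ n ih =>
      intro x
      have : (x : ℝ) + ((n : ℤ) + 1 : ℤ) = (x + ((n : ℤ) : ℝ)) + 1 := by push_cast; ring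
      rw [this, M.per, ih]; push_cast; ring
  | pred n ih =>
      intro x
      have : (x : ℝ) + (-(n : ℤ) - 1 : ℤ) = (x + (-(n:ℤ) - 1 : ℤ) + 1) - 1 := by ring
      have h2 : M.F (x + (-(n:ℤ)-1:ℤ) + 1) = M.F (x + (-(n:ℤ)-1:ℤ)) + M.e := M.per _
      have h3 : (x : ℝ) + (-(n:ℤ)-1:ℤ) + 1 = x + (-(n:ℤ):ℤ) := by push_cast; ring
      rw [h3] at h2
      rw [ih] at h2
      have := h2.symm
      push_cast at this ⊢
      linarith

lemma badPerInt {x : ℝ} (hx : x ∈ M.bad) : ∀ n : ℤ, x + n ∈ M.bad := by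
  intro n
  induction n using Int.induction_on with
  | zero => simpa using hx
  | succ n ih =>
      have := (M.badPer _ ih).1
      have h : x + ((n:ℤ) + 1 : ℤ) = (x + (n:ℤ)) + 1 := by push_cast; ring
      rwa [h]
  | pred n ih =>
      have := (M.badPer _ ih).2
      have h : x + (-(n:ℤ) - 1 : ℤ) = (x + (-(n:ℤ):ℤ)) - 1 := by push_cast; ring
      rwa [h]

lemma surj : Function.Surjective M.F := by
  intro y
  have he : (1:ℝ) ≤ (M.e : ℝ) := by exact_mod_cast M.epos
  obtain ⟨n, hn⟩ : ∃ n : ℤ, y ≤ M.F 0 + n * M.e := by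
    obtain ⟨n, hn⟩ := exists_int_gt ((y - M.F 0) / M.e)
    refine ⟨n, ?_⟩
    have h0 : (0:ℝ) < M.e := by linarith
    have := (div_lt_iff₀ h0).1 hn
    linarith
  obtain ⟨n', hn'⟩ : ∃ n' : ℤ, M.F 0 + n' * M.e ≤ y := by
    obtain ⟨n', hn'⟩ := exists_int_lt ((y - M.F 0) / M.e)
    refine ⟨n', ?_⟩
    have h0 : (0:ℝ) < M.e := by linarith
    have := (lt_div_iff₀ h0).1 hn'
    linarith
  have h1 : M.F ((n' : ℝ)) = M.F 0 + n' * M.e := by simpa using M.perInt n' 0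
  have h2 : M.F ((n : ℝ)) = M.F 0 + n * M.e := by simpa using M.perInt n 0
  have hle : (n' : ℝ) ≤ (n : ℝ) := by
    by_contra hc
    push_neg at hc
    have := M.mono hc
    rw [h1, h2] at this
    linarith
  have := intermediate_value_Icc hle M.cont.continuousOn
  have hy : y ∈ Set.Icc (M.F n') (M.F n) := by rw [h1, h2]; exact ⟨hn', hn⟩
  obtain ⟨x, _, hx⟩ := this hy
  exact ⟨x, hx⟩

/-- The order isomorphism determined by `M`. -/
def oi : ℝ ≃o ℝ := StrictMono.orderIsoOfSurjective M.F M.mono M.surj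

lemma oi_apply (x : ℝ) : M.oi x = M.F x := rfl

lemma oi_symm_F (x : ℝ) : M.oi.symm (M.F x) = x :=
  StrictMono.orderIsoOfSurjective_symm_apply_self _ _ _ _

lemma F_oi_symm (y : ℝ) : M.F (M.oi.symm y) = y :=
  StrictMono.orderIsoOfSurjective_self_symm_apply _ _ _ _

lemma preZ {x : ℝ} (hx : M.F x ∈ zpows 2) : x ∈ zpows 2 := by
  by_cases hb : x ∈ M.bad
  · exact M.badZ hb
  · obtain ⟨k, c, hc, ε, hε, hf⟩ := M.nice x hb
    have hx2 : M.F x = (2:ℝ)^k * x + c := hf x (by simpa using hε)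
    have : x = (2:ℝ)^(-k) * (M.F x - c) := by
      rw [hx2]
      rw [zpow_neg]
      field_simp
      ring
    rw [this]
    exact Z_zpow_mul _ (Z_sub hx hc)

/-- Local inverse niceness. -/
lemma nice_inv {x : ℝ} (hx : x ∉ M.bad) : NiceAt (fun y => M.oi.symm y) (M.F x) := by
  obtain ⟨k, c, hc, ε, hε, hf⟩ := M.nice x hx
  refine ⟨-k, (2:ℝ)^(-k) * (-c), Z_zpow_mul _ (Z_neg hc), (2:ℝ)^k * ε, by positivity, ?_⟩
  intro y hy
  set z := (2:ℝ)^(-k) * (y - c) with hz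
  have hzx : |z - x| < ε := by
    have hfx : M.F x = (2:ℝ)^k * x + c := hf x (by simpa using hε)
    have hcan : (2:ℝ)^(-k) * 2^k = 1 := by
      rw [← zpow_add₀ (by norm_num : (2:ℝ) ≠ 0)]; simp
    have : z - x = (2:ℝ)^(-k) * (y - M.F x) := by
      rw [hz, hfx]; linear_combination x * hcan
    rw [this, abs_mul, abs_of_pos (by positivity : (0:ℝ) < (2:ℝ)^(-k))]
    have h2 : (2:ℝ)^(-k) * ((2:ℝ)^k * ε) = ε := by
      rw [← mul_assoc, ← zpow_add₀ (by norm_num : (2:ℝ) ≠ 0)]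
      simp
    calc (2:ℝ)^(-k) * |y - M.F x| < (2:ℝ)^(-k) * ((2:ℝ)^k * ε) := by
          exact mul_lt_mul_of_pos_left hy (by positivity)
      _ = ε := h2
  have hFz : M.F z = y := by
    rw [hf z hzx, hz, ← mul_assoc, ← zpow_add₀ (by norm_num : (2:ℝ) ≠ 0)]
    simp
  have : M.oi.symm y = z := by rw [← hFz, M.oi_symm_F]
  show M.oi.symm y = _
  rw [this, hz]; ring

lemma badFin' (S : Set ℝ) (hS : ∀ a b : ℝ, (S ∩ Set.Icc a b).Finite) :
    ∀ a b : ℝ, (M.F ⁻¹' S ∩ Set.Icc a b).Finite := by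
  intro a b
  have hsub : M.F ⁻¹' S ∩ Set.Icc a b ⊆ M.F ⁻¹' (S ∩ Set.Icc (M.F a) (M.F b)) := by
    rintro x ⟨hx1, hx2⟩
    exact ⟨hx1, M.mono.monotone hx2.1, M.mono.monotone hx2.2⟩
  exact Set.Finite.subset ((hS _ _).preimage (M.mono.injective.injOn)) hsub

/-- Composition of nice maps. -/
def comp (M₂ M₁ : NM) : NM where
  F := M₂.F ∘ M₁.F
  mono := M₂.mono.comp M₁.mono
  cont := M₂.cont.comp M₁.cont
  e := M₁.e * M₂.e
  epos := by have := M₁.epos; have := M₂.epos; nlinarith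
  per := by
    intro x
    simp only [Function.comp_apply]
    rw [M₁.per]
    have := M₂.perInt M₁.e (M₁.F x)
    rw [this]
    push_cast; ring
  bad := M₁.bad ∪ M₁.F ⁻¹' M₂.bad
  badFin := by
    intro a b
    rw [Set.union_inter_distrib_right]
    exact (M₁.badFin a b).union (M₁.badFin' M₂.bad M₂.badFin a b)
  badPer := by
    rintro x (hx | hx)
    · exact ⟨Or.inl (M₁.badPer x hx).1, Or.inl (M₁.badPer x hx).2⟩
    · constructor
      · refine Or.inr ?_
        have : M₁.F (x + 1) = M₁.F x + M₁.e := M₁.per x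
        show M₁.F (x+1) ∈ M₂.bad
        rw [this]
        simpa using M₂.badPerInt hx M₁.e
      · refine Or.inr ?_
        show M₁.F (x-1) ∈ M₂.bad
        have h1 : M₁.F ((x - 1) + 1) = M₁.F (x-1) + M₁.e := M₁.per (x-1)
        have h2 : (x - 1) + 1 = x := by ring
        rw [h2] at h1
        have : M₁.F (x - 1) = M₁.F x + (-M₁.e) := by linarith
        rw [this]
        have := M₂.badPerInt hx (-M₁.e)
        simpa using this
  badZ := by
    rintro x (hx | hx)
    · exact M₁.badZ hx
    · exact M₁.preZ (M₂.badZ hx)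
  nice := by
    intro x hx
    simp only [Set.mem_union, not_or, Set.mem_preimage] at hx
    obtain ⟨hx1, hx2⟩ := hx
    obtain ⟨k, c, hc, ε, hε, hf⟩ := M₁.nice x hx1
    obtain ⟨k', c', hc', ε', hε', hf'⟩ := M₂.nice (M₁.F x) hx2
    refine ⟨k' + k, (2:ℝ)^k' * c + c', Z_add (Z_zpow_mul _ hc) hc',
      min ε ((2:ℝ)^(-k) * ε'), by positivity, ?_⟩
    intro y hy
    have hy1 : |y - x| < ε := lt_of_lt_of_le hy (min_le_left _ _)
    have hy2 : |y - x| < (2:ℝ)^(-k) * ε' := lt_of_lt_of_le hy (min_le_right _ _)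
    have hFy : M₁.F y = (2:ℝ)^k * y + c := hf y hy1
    have hFx : M₁.F x = (2:ℝ)^k * x + c := hf x (by simpa using hε)
    have hdist : |M₁.F y - M₁.F x| < ε' := by
      rw [hFy, hFx]
      have : (2:ℝ)^k * y + c - ((2:ℝ)^k * x + c) = (2:ℝ)^k * (y - x) := by ring
      rw [this, abs_mul, abs_of_pos (by positivity : (0:ℝ) < (2:ℝ)^k)]
      calc (2:ℝ)^k * |y - x| < (2:ℝ)^k * ((2:ℝ)^(-k) * ε') :=
            mul_lt_mul_of_pos_left hy2 (by positivity)
        _ = ε' := by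
            rw [← mul_assoc, ← zpow_add₀ (by norm_num : (2:ℝ) ≠ 0)]
            simp
    show M₂.F (M₁.F y) = _
    rw [hf' _ hdist, hFy]
    rw [zpow_add₀ (by norm_num : (2:ℝ) ≠ 0)]
    ring
  mapsZ := by
    intro q hq
    exact M₂.mapsZ _ (M₁.mapsZ _ hq)

/-- Adding an integer constant. -/
def addInt (p : ℤ) : NM where
  F := fun x => M.F x + p
  mono := fun a b hab => by simpa using M.mono hab
  cont := M.cont.add continuous_const
  e := M.e
  epos := M.epos
  per := fun x => by
    show M.F (x+1) + (p:ℝ) = (M.F x + p) + M.e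
    rw [M.per]; ring
  bad := M.bad
  badFin := M.badFin
  badPer := M.badPer
  badZ := M.badZ
  nice := by
    intro x hx
    obtain ⟨k, c, hc, ε, hε, hf⟩ := M.nice x hx
    refine ⟨k, c + p, Z_add hc (Z_int p), ε, hε, fun y hy => ?_⟩
    show M.F y + (p:ℝ) = _
    rw [hf y hy]; ring
  mapsZ := fun q hq => Z_add (M.mapsZ q hq) (Z_int p)

/-- The identity nice map. -/
def idNM : NM where
  F := id
  mono := strictMono_id
  cont := continuous_id
  e := 1
  epos := le_refl 1
  per := fun x => by simp
  bad := ∅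
  badFin := fun a b => by simp
  badPer := by simp
  badZ := by simp
  nice := fun x _ => ⟨0, 0, Z_zero, 1, one_pos, fun y _ => by simp⟩
  mapsZ := fun q hq => hq

/-- Iterates of a nice map. -/
def iter (M : NM) : ℕ → NM
  | 0 => idNM
  | (j+1) => (iter M j).comp M

lemma iter_apply (M : NM) (j : ℕ) (x : ℝ) : (M.iter j).F x = M.F^[j] x := by
  induction j generalizing x with
  | zero => rfl
  | succ j ih =>
      show (M.iter j).F (M.F x) = _
      rw [ih, Function.iterate_succ_apply]

end NM

end St18

namespace St18

lemma shiftInt {B : Set ℝ} (hper : ∀ x ∈ B, x + 1 ∈ B ∧ x - 1 ∈ B) :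
    ∀ (n : ℤ) {x}, x ∈ B → x + n ∈ B := by
  intro n
  induction n using Int.induction_on with
  | zero => intro x hx; simpa using hx
  | succ n ih =>
      intro x hx
      have := (hper _ (ih hx)).1
      have h : x + (((n:ℤ) + 1 : ℤ) : ℝ) = (x + ((n:ℤ):ℝ)) + 1 := by push_cast; ring
      rwa [h]
  | pred n ih =>
      intro x hx
      have := (hper _ (ih hx)).2
      have h : x + ((-(n:ℤ) - 1 : ℤ) : ℝ) = (x + ((-(n:ℤ):ℤ)):ℝ) - 1 := by push_cast; ring
      rwa [h]

lemma locFin_of_perFin {B : Set ℝ} (hfin : (B ∩ Set.Ico (0:ℝ) 1).Finite)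
    (hper : ∀ x ∈ B, x + 1 ∈ B ∧ x - 1 ∈ B) :
    ∀ a b : ℝ, (B ∩ Set.Icc a b).Finite := by
  intro a b
  have hsub : B ∩ Set.Icc a b ⊆
      ⋃ n ∈ Finset.Icc ⌊a⌋ ⌊b⌋, (fun y => y + (n:ℝ)) '' (B ∩ Set.Ico 0 1) := by
    rintro x ⟨hxB, hxa, hxb⟩
    have h1 : x - (⌊x⌋ : ℝ) ∈ B := by
      have := shiftInt hper (-⌊x⌋) hxB
      push_cast at this
      simpa [sub_eq_add_neg] using this
    have h2 : x - (⌊x⌋ : ℝ) ∈ Set.Ico (0:ℝ) 1 := by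
      constructor
      · linarith [Int.floor_le x]
      · linarith [Int.lt_floor_add_one x]
    refine Set.mem_biUnion (?_ : ⌊x⌋ ∈ Finset.Icc ⌊a⌋ ⌊b⌋) ?_
    · rw [Finset.mem_Icc]
      exact ⟨Int.floor_le_floor hxa, Int.floor_le_floor hxb⟩
    · exact ⟨x - ⌊x⌋, ⟨h1, h2⟩, by ring⟩
  refine Set.Finite.subset ?_ hsub
  refine Set.Finite.biUnion (Finset.Icc ⌊a⌋ ⌊b⌋).finite_toSet ?_
  intro n _
  exact hfin.image _

lemma niceAt_shift_up {F : ℝ → ℝ} (hper : ∀ x, F (x + 1) = F x + 1) {x : ℝ}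
    (h : NiceAt F x) : NiceAt F (x + 1) := by
  obtain ⟨k, c, hc, ε, hε, hf⟩ := h
  refine ⟨k, c + 1 - 2^k, Z_sub (Z_add hc Z_one) (Z_zpow k), ε, hε, ?_⟩
  intro y hy
  have h1 : |(y - 1) - x| < ε := by
    have : y - 1 - x = y - (x + 1) := by ring
    rwa [this]
  have h2 : F ((y-1) + 1) = F (y-1) + 1 := hper _
  have h3 : (y - 1) + 1 = y := by ring
  rw [h3] at h2
  rw [h2, hf _ h1]
  ring

lemma niceAt_shift_down {F : ℝ → ℝ} (hper : ∀ x, F (x + 1) = F x + 1) {x : ℝ}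
    (h : NiceAt F x) : NiceAt F (x - 1) := by
  obtain ⟨k, c, hc, ε, hε, hf⟩ := h
  refine ⟨k, c - 1 + 2^k, Z_add (Z_sub hc Z_one) (Z_zpow k), ε, hε, ?_⟩
  intro y hy
  have h1 : |(y + 1) - x| < ε := by
    have : y + 1 - x = y - (x - 1) := by ring
    rwa [this]
  have h2 : F (y + 1) = F y + 1 := hper _
  have h4 : F y = F (y+1) - 1 := by linarith
  rw [h4, hf _ h1]
  ring

lemma const_of_int_valued {u : ℝ → ℝ} (hc : Continuous u)
    (hint : ∀ x, ∃ n : ℤ, u x = n) : ∀ x, u x = u 0 := by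
  intro x
  by_contra hne
  obtain ⟨n₀, hn₀⟩ := hint 0
  obtain ⟨n₁, hn₁⟩ := hint x
  have hnn : n₀ ≠ n₁ := by
    rintro rfl
    exact hne (hn₁.trans hn₀.symm)
  rcases lt_or_gt_of_ne hnn with hlt | hgt
  · -- n₀ < n₁, so u 0 < v < u x
    have hv1 : ((n₀ : ℝ) + 1/2) ∈ Set.uIcc (u 0) (u x) := by
      rw [Set.mem_uIcc]
      left
      constructor
      · rw [hn₀]; linarith
      · rw [hn₁]
        have : (n₀ : ℝ) + 1 ≤ n₁ := by exact_mod_cast hlt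
        linarith
    obtain ⟨y, _, hy⟩ := intermediate_value_uIcc hc.continuousOn hv1
    obtain ⟨n₂, hn₂⟩ := hint y
    rw [hn₂] at hy
    have : 2 * n₂ = 2 * n₀ + 1 := by
      have : (2:ℝ) * n₂ = 2 * n₀ + 1 := by rw [hy]; ring
      exact_mod_cast this
    omega
  · have hv1 : ((n₁ : ℝ) + 1/2) ∈ Set.uIcc (u 0) (u x) := by
      rw [Set.mem_uIcc]
      right
      constructor
      · rw [hn₁]; linarith
      · rw [hn₀]
        have : (n₁ : ℝ) + 1 ≤ n₀ := by exact_mod_cast hgt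
        linarith
    obtain ⟨y, _, hy⟩ := intermediate_value_uIcc hc.continuousOn hv1
    obtain ⟨n₂, hn₂⟩ := hint y
    rw [hn₂] at hy
    have : 2 * n₂ = 2 * n₁ + 1 := by
      have : (2:ℝ) * n₂ = 2 * n₁ + 1 := by rw [hy]; ring
      exact_mod_cast this
    omega

lemma finite_avoid {S : Set ℝ} (hS : S.Finite) {x : ℝ} (hx : x ∉ S) :
    ∃ ε > 0, ∀ y, |y - x| < ε → y ∉ S := by
  have hcl : IsClosed S := hS.isClosed
  have : x ∈ Sᶜ := hx
  obtain ⟨ε, hε, hball⟩ := Metric.isOpen_iff.1 hcl.isOpen_compl x this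
  refine ⟨ε, hε, fun y hy => ?_⟩
  have : y ∈ Metric.ball x ε := by
    rw [Metric.mem_ball, Real.dist_eq]
    exact hy
  exact hball this

lemma const_on_Ioo (F : ℝ → ℝ) {a b : ℝ} (hab : a < b)
    (h : ∀ y ∈ Set.Ioo a b, NiceAt F y) :
    ∃ k : ℤ, ∃ c ∈ zpows 2, ∀ y ∈ Set.Ioo a b, F y = (2:ℝ)^k * y + c := by
  haveI : PreconnectedSpace (Set.Ioo a b) := Subtype.preconnectedSpace isPreconnected_Ioo
  choose k c hcZ ε hε hf using fun (y : Set.Ioo a b) => h y y.2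
  set D : Set.Ioo a b → ℤ × ℝ := fun y => (k y, c y) with hD
  have hlc : IsLocallyConstant D := by
    rw [IsLocallyConstant.iff_eventually_eq]
    intro y
    have hball : Metric.ball (y:ℝ) (ε y) ∈ nhds (y:ℝ) := Metric.ball_mem_nhds _ (hε y)
    have hev : {z : Set.Ioo a b | (z:ℝ) ∈ Metric.ball (y:ℝ) (ε y)} ∈ nhds y := by
      have ht := (continuous_subtype_val.tendsto y) hball
      exact Filter.mem_map.1 ht
    filter_upwards [hev] with z hz
    have hzy : |(z:ℝ) - (y:ℝ)| < ε y := by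
      rw [Metric.mem_ball, Real.dist_eq] at hz
      exact hz
    set δ := min (ε z) (ε y - |(z:ℝ) - (y:ℝ)|) with hδ
    have hδpos : 0 < δ := lt_min (hε z) (by linarith)
    have key : ∀ w : ℝ, |w - (z:ℝ)| < δ →
        (2:ℝ)^(k z) * w + c z = (2:ℝ)^(k y) * w + c y := by
      intro w hw
      have h1 : |w - (z:ℝ)| < ε z := lt_of_lt_of_le hw (min_le_left _ _)
      have h2 : |w - (y:ℝ)| < ε y := by
        have h3 : |w - (z:ℝ)| < ε y - |(z:ℝ) - (y:ℝ)| := lt_of_lt_of_le hw (min_le_right _ _)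
        calc |w - (y:ℝ)| ≤ |w - (z:ℝ)| + |(z:ℝ) - (y:ℝ)| := abs_sub_le _ _ _
          _ < ε y := by linarith
      rw [← hf z w h1, ← hf y w h2]
    obtain ⟨hk, hc⟩ := affine_data_eq hδpos key
    rw [hD]
    simp only [Prod.mk.injEq]
    exact ⟨hk, hc⟩
  have hmid : (a + b)/2 ∈ Set.Ioo a b := ⟨by linarith, by linarith⟩
  set y₀ : Set.Ioo a b := ⟨(a+b)/2, hmid⟩ with hy₀
  refine ⟨k y₀, c y₀, hcZ y₀, ?_⟩
  intro y hy
  set yy : Set.Ioo a b := ⟨y, hy⟩ with hyy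
  have hDc : D yy = D y₀ := hlc.apply_eq_of_preconnectedSpace yy y₀
  have hk : k yy = k y₀ := congrArg Prod.fst hDc
  have hc : c yy = c y₀ := congrArg Prod.snd hDc
  have := hf yy y (by have hyy' : ((yy : ℝ)) = y := rfl; rw [hyy', sub_self, abs_zero]; exact hε yy)
  rw [hk, hc] at this
  exact this

end St18

namespace St18

lemma perInt_one {P : ℝ → ℝ} (hper : ∀ x, P (x + 1) = P x + 1) :
    ∀ (n : ℤ) (x : ℝ), P (x + n) = P x + n := by
  intro n
  induction n using Int.induction_on with
  | zero => simp
  | succ n ih =>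
      intro x
      have h : (x : ℝ) + (((n:ℤ) + 1 : ℤ) : ℝ) = (x + ((n:ℤ):ℝ)) + 1 := by push_cast; ring
      rw [h, hper, ih]; push_cast; ring
  | pred n ih =>
      intro x
      have h2 : P ((x + ((-(n:ℤ) - 1 : ℤ):ℝ)) + 1) = P (x + ((-(n:ℤ) - 1 : ℤ):ℝ)) + 1 := hper _
      have h3 : (x : ℝ) + ((-(n:ℤ)-1:ℤ):ℝ) + 1 = x + ((-(n:ℤ):ℤ):ℝ) := by push_cast; ring
      rw [h3, ih] at h2
      push_cast at h2 ⊢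
      linarith

lemma locFin_preimage {P : ℝ → ℝ} (hm : StrictMono P) {B : Set ℝ}
    (hB : ∀ a b : ℝ, (B ∩ Set.Icc a b).Finite) :
    ∀ a b : ℝ, (P ⁻¹' B ∩ Set.Icc a b).Finite := by
  intro a b
  have hsub : P ⁻¹' B ∩ Set.Icc a b ⊆ P ⁻¹' (B ∩ Set.Icc (P a) (P b)) := by
    rintro x ⟨hx1, hx2⟩
    exact ⟨hx1, hm.monotone hx2.1, hm.monotone hx2.2⟩
  exact Set.Finite.subset ((hB _ _).preimage hm.injective.injOn) hsub

lemma niceAt_comp {P Q : ℝ → ℝ} {x : ℝ} (hP : NiceAt P x) (hQ : NiceAt Q (P x)) :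
    NiceAt (fun y => Q (P y)) x := by
  obtain ⟨k, c, hc, ε, hε, hf⟩ := hP
  obtain ⟨k', c', hc', ε', hε', hf'⟩ := hQ
  refine ⟨k' + k, (2:ℝ)^k' * c + c', Z_add (Z_zpow_mul _ hc) hc',
    min ε ((2:ℝ)^(-k) * ε'), by positivity, ?_⟩
  intro y hy
  have hy1 : |y - x| < ε := lt_of_lt_of_le hy (min_le_left _ _)
  have hy2 : |y - x| < (2:ℝ)^(-k) * ε' := lt_of_lt_of_le hy (min_le_right _ _)
  have hPy : P y = (2:ℝ)^k * y + c := hf y hy1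
  have hPx : P x = (2:ℝ)^k * x + c := hf x (by simpa using hε)
  have hdist : |P y - P x| < ε' := by
    rw [hPy, hPx]
    have h4 : (2:ℝ)^k * y + c - ((2:ℝ)^k * x + c) = (2:ℝ)^k * (y - x) := by ring
    rw [h4, abs_mul, abs_of_pos (by positivity : (0:ℝ) < (2:ℝ)^k)]
    calc (2:ℝ)^k * |y - x| < (2:ℝ)^k * ((2:ℝ)^(-k) * ε') :=
          mul_lt_mul_of_pos_left hy2 (by positivity)
      _ = ε' := by
          rw [← mul_assoc, ← zpow_add₀ (by norm_num : (2:ℝ) ≠ 0)]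
          simp
  show Q (P y) = _
  rw [hf' _ hdist, hPy, zpow_add₀ (by norm_num : (2:ℝ) ≠ 0)]
  ring

lemma niceAt_congr {P Q : ℝ → ℝ} {x δ : ℝ} (hδ : 0 < δ)
    (hagree : ∀ y, |y - x| < δ → P y = Q y) (hQ : NiceAt Q x) : NiceAt P x := by
  obtain ⟨k, c, hc, ε, hε, hf⟩ := hQ
  refine ⟨k, c, hc, min ε δ, lt_min hε hδ, ?_⟩
  intro y hy
  rw [hagree y (lt_of_lt_of_le hy (min_le_right _ _))]
  exact hf y (lt_of_lt_of_le hy (min_le_left _ _))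

/-- Transfer of niceness through the identity `Mt.F ∘ Ft = MK.F + p'` near `u`. -/
lemma nice_transfer (Mt MK : NM) (Ft : ℝ → ℝ) (p' : ℤ) {u δ : ℝ} (hδ : 0 < δ)
    (hid : ∀ v, |v - u| < δ → Mt.F (Ft v) = MK.F v + p')
    (hu1 : u ∉ MK.bad) (hu2 : Ft u ∉ Mt.bad) : NiceAt Ft u := by
  set A := MK.addInt p' with hA
  have hAu : A.F u = Mt.F (Ft u) := by
    have := hid u (by simpa using hδ)
    exact this.symm
  have hniceA : NiceAt A.F u := A.nice u hu1
  have hniceInv : NiceAt (fun y => Mt.oi.symm y) (A.F u) := by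
    rw [hAu]
    exact Mt.nice_inv hu2
  have hcomp : NiceAt (fun v => Mt.oi.symm (A.F v)) u := niceAt_comp hniceA hniceInv
  refine niceAt_congr hδ ?_ hcomp
  intro v hv
  have h1 : Mt.F (Ft v) = A.F v := by
    show Mt.F (Ft v) = MK.F v + (p':ℝ)
    exact hid v hv
  calc Ft v = Mt.oi.symm (Mt.F (Ft v)) := (Mt.oi_symm_F _).symm
    _ = Mt.oi.symm (A.F v) := by rw [h1]

lemma exists_tK (k : ℤ) {c : ℝ} (hc : c ∈ zpows 2) :
    ∃ (t K : ℕ) (p' : ℤ), ∀ y : ℝ, (2:ℝ)^(t:ℕ) * ((2:ℝ)^k * y + c) = 2^(K:ℕ) * y + p' := by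
  obtain ⟨a, b, rfl⟩ := Z_def.1 hc
  refine ⟨(max (-k) (max (-b) 0)).toNat, (k + (max (-k) (max (-b) 0)).toNat).toNat,
    a * 2 ^ ((b + (max (-k) (max (-b) 0)).toNat).toNat), ?_⟩
  intro y
  set t : ℕ := (max (-k) (max (-b) 0)).toNat with ht
  have h1 : (2:ℝ)^(t:ℕ) = (2:ℝ)^((t:ℤ)) := by rw [zpow_natCast]
  have hk : ((k + (t:ℤ)).toNat : ℤ) = k + t := by
    have : -k ≤ (t:ℤ) := by rw [ht]; omega
    omega
  have hb : ((b + (t:ℤ)).toNat : ℤ) = b + t := by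
    have : -b ≤ (t:ℤ) := by rw [ht]; omega
    omega
  have h2 : (2:ℝ)^((k + (t:ℤ)).toNat : ℕ) = (2:ℝ)^(k + (t:ℤ)) := by
    rw [← zpow_natCast (2:ℝ), hk]
  have h3 : ((a * 2 ^ ((b + (t:ℤ)).toNat) : ℤ) : ℝ) = a * (2:ℝ)^(b + (t:ℤ)) := by
    push_cast
    rw [← zpow_natCast (2:ℝ), hb]
  rw [h1, h2, h3, zpow_add₀ (by norm_num : (2:ℝ) ≠ 0), zpow_add₀ (by norm_num : (2:ℝ) ≠ 0)]
  ring

end St18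

namespace St18

/-- Build a nice map from `CircPL` data. -/
lemma mkNM (P : ℝ → ℝ) (mono : StrictMono P) (cont : Continuous P) (e : ℤ) (epos : 1 ≤ e)
    (per : ∀ x, P (x + 1) = P x + e) (hPL : CircPL 2 1 P)
    (hZ : ∀ q ∈ zpows 2, P q ∈ zpows 2) :
    ∃ M : NM, M.F = P ∧ M.e = e := by
  obtain ⟨B, hBfin, hBper, hBZ, hBaff⟩ := hPL
  have hnice : ∀ x ∉ B, NiceAt P x := by
    intro x hx
    obtain ⟨k, c, ε, hε, hf⟩ := hBaff x hx
    have hf' : ∀ y : ℝ, |y - x| < ε → P y = (2:ℝ)^k * y + c := by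
      intro y hy
      have := hf y hy
      norm_num at this
      exact this
    obtain ⟨q, hqZ, hq⟩ := Z_dense x ε hε
    have hcZ : c ∈ zpows 2 := by
      have hc : c = P q - (2:ℝ)^k * q := by rw [hf' q hq]; ring
      rw [hc]
      exact Z_sub (hZ q hqZ) (Z_zpow_mul _ hqZ)
    exact ⟨k, c, hcZ, ε, hε, hf'⟩
  exact ⟨{ F := P, mono := mono, cont := cont, e := e, epos := epos, per := per,
           bad := B, badFin := locFin_of_perFin hBfin hBper, badPer := hBper, badZ := hBZ,
           nice := hnice, mapsZ := hZ }, rfl, rfl⟩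

end St18

open St18 in
/-- **Lemma 12.1.** If `h` is an orientation-preserving homeomorphism of
`S¹` with `h(ℤ[1/2]) ⊆ ℤ[1/2]` such that `h ν₂ h⁻¹` is an everywhere-defined element of
`T̄_{2,1}`, then `h T_{2,1} h⁻¹ ⊆ T_{2,1}`. -/
theorem stmt_18 (h h' : AddCircle (1 : ℝ) → AddCircle (1 : ℝ))
    (hh : OrientedHomeo 1 h)
    (hinv₁ : ∀ z, h' (h z) = z) (hinv₂ : ∀ z, h (h' z) = z)
    (hdy : ∀ z ∈ dyadicCircle, h z ∈ dyadicCircle)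
    (hconj : MemTbar 2 1 (h ∘ nu2 ∘ h')) :
    ∀ f, MemT 2 1 f → MemT 2 1 (h ∘ f ∘ h') := by
  classical
  obtain ⟨H, Hlift, Hper, Hmono, Hsurj⟩ := hh
  obtain ⟨G, d, hd, Glift, Gper, Gmono, Gcont, GPL, GZ⟩ := hconj
  set oiH := StrictMono.orderIsoOfSurjective H Hmono Hsurj with hoiH
  set H' : ℝ → ℝ := fun y => oiH.symm y with hH'def
  have Hcont : Continuous H := by
    have := oiH.continuous
    rwa [hoiH, StrictMono.coe_orderIsoOfSurjective] at this
  have H'cont : Continuous H' := oiH.symm.continuous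
  have H'H : ∀ x, H' (H x) = x := fun x => oiH.symm_apply_apply x
  have HH' : ∀ y, H (H' y) = y := fun y => oiH.apply_symm_apply y
  have H'mono : StrictMono H' := fun a b hab => oiH.symm.strictMono hab
  have H'per : ∀ x, H' (x + 1) = H' x + 1 := by
    intro x
    apply Hmono.injective
    calc H (H' (x+1)) = x + 1 := HH' _
      _ = H (H' x) + 1 := by rw [HH']
      _ = H (H' x + 1) := (Hper _).symm
  have h'lift : ∀ x : ℝ, h' ((x : ℝ) : AddCircle (1:ℝ)) = ((H' x : ℝ) : AddCircle (1:ℝ)) := by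
    intro x
    have h1 : h ((H' x : ℝ) : AddCircle (1:ℝ)) = ((x : ℝ) : AddCircle (1:ℝ)) := by
      rw [Hlift, HH']
    rw [← h1, hinv₁]
  -- equality of coercions gives integer difference
  have coe_eq : ∀ a b : ℝ, ((a : ℝ) : AddCircle (1:ℝ)) = ((b : ℝ) : AddCircle (1:ℝ)) →
      ∃ n : ℤ, a = b + n := by
    intro a b hab
    have h1 : a - b ∈ AddSubgroup.zmultiples (1:ℝ) :=
      QuotientAddGroup.eq_iff_sub_mem.1 hab
    obtain ⟨n, hn⟩ := AddSubgroup.mem_zmultiples_iff.1 h1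
    refine ⟨n, ?_⟩
    have : (n : ℝ) = a - b := by rw [← hn]; simp
    linarith
  have HZ : ∀ q ∈ zpows 2, H q ∈ zpows 2 := by
    intro q hq
    have h1 : ((H q : ℝ) : AddCircle (1:ℝ)) = h ((q:ℝ) : AddCircle (1:ℝ)) := (Hlift q).symm
    obtain ⟨q', hq', heq⟩ := hdy _ ⟨q, hq, rfl⟩
    rw [heq] at h1
    obtain ⟨n, hn⟩ := coe_eq _ _ h1
    rw [hn]
    exact Z_add hq' (Z_int n)
  -- the integer m with H(2y) = G(H y) - m
  have nu2coe : ∀ y : ℝ, nu2 ((y:ℝ) : AddCircle (1:ℝ)) = ((2*y : ℝ) : AddCircle (1:ℝ)) := by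
    intro y
    show ((y:ℝ) : AddCircle (1:ℝ)) + ((y:ℝ) : AddCircle (1:ℝ)) = _
    rw [← AddCircle.coe_add]
    congr 1
    ring
  have hcirc : ∀ x : ℝ, ((G x : ℝ) : AddCircle (1:ℝ)) = ((H (2 * H' x) : ℝ) : AddCircle (1:ℝ)) := by
    intro x
    have h1 := Glift x
    rw [Function.comp_apply, Function.comp_apply, h'lift, nu2coe, Hlift] at h1
    exact h1.symm
  have hu : ∀ x : ℝ, ∃ n : ℤ, G x - H (2 * H' x) = n := by
    intro x
    obtain ⟨n, hn⟩ := coe_eq _ _ (hcirc x)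
    exact ⟨n, by linarith⟩
  have ucont : Continuous (fun x => G x - H (2 * H' x)) :=
    Gcont.sub (Hcont.comp (continuous_const.mul H'cont))
  have uconst := const_of_int_valued ucont hu
  obtain ⟨m, hm⟩ := hu 0
  have key : ∀ y : ℝ, H (2 * y) = G (H y) - m := by
    intro y
    have h1 : G (H y) - H (2 * H' (H y)) = m := by
      rw [uconst (H y)]; exact hm
    rw [H'H] at h1
    linarith
  -- the nice map Mg (lift of the conjugated doubling map, normalized)
  obtain ⟨Mg, hMgF, hMge⟩ : ∃ M : NM, M.F = (fun x => G x - m) ∧ M.e = (d:ℤ) := by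
    apply mkNM
    · intro a b hab
      show G a - (m:ℝ) < G b - (m:ℝ)
      linarith [Gmono hab]
    · exact Gcont.sub continuous_const
    · exact_mod_cast hd
    · intro x
      rw [Gper]
      push_cast
      ring
    · obtain ⟨B, hBfin, hBper, hBZ, hBaff⟩ := GPL
      refine ⟨B, hBfin, hBper, hBZ, ?_⟩
      intro x hx
      obtain ⟨k, c, ε, hε, hf⟩ := hBaff x hx
      refine ⟨k, c - m, ε, hε, fun y hy => ?_⟩
      show G y - (m:ℝ) = _
      rw [hf y hy]
      ring
    · intro q hq
      exact Z_sub (GZ q hq) (Z_int m)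
  have keyMg : ∀ y : ℝ, H (2 * y) = Mg.F (H y) := by
    intro y
    rw [hMgF]
    exact key y
  have Hiter : ∀ (s : ℕ) (y : ℝ), (Mg.iter s).F (H y) = H (2^s * y) := by
    intro s
    induction s with
    | zero =>
        intro y
        show H y = H (2^0 * y)
        norm_num
    | succ s ih =>
        intro y
        show (Mg.iter s).F (Mg.F (H y)) = _
        rw [← keyMg y, ih (2*y)]
        congr 1
        ring
  -- now fix f ∈ T
  intro f hf
  obtain ⟨F, Flift, Fper, Fmono, Fsurj, FPL, FZ⟩ := hf
  have Fcont : Continuous F := by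
    have := (StrictMono.orderIsoOfSurjective F Fmono Fsurj).continuous
    rwa [StrictMono.coe_orderIsoOfSurjective] at this
  obtain ⟨Mf, hMfF, hMfe⟩ : ∃ M : NM, M.F = F ∧ M.e = (1:ℤ) := by
    apply mkNM
    · exact Fmono
    · exact Fcont
    · exact le_refl 1
    · intro x
      rw [Fper]
      norm_num
    · exact FPL
    · exact FZ
  set Ft : ℝ → ℝ := fun v => H (Mf.F (H' v)) with hFt
  have Ftmono : StrictMono Ft := fun a b hab => Hmono (Mf.mono (H'mono hab))
  have Ftsurj : Function.Surjective Ft := by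
    intro z
    obtain ⟨y, hy⟩ := Mf.surj (H' z)
    exact ⟨H y, by show H (Mf.F (H' (H y))) = z; rw [H'H, hy, HH']⟩
  have Ftper : ∀ v, Ft (v + 1) = Ft v + 1 := by
    intro v
    show H (Mf.F (H' (v+1))) = H (Mf.F (H' v)) + 1
    rw [H'per, Mf.per, hMfe]
    push_cast
    rw [Hper]
  -- the core identity
  have core_id : ∀ (k : ℤ) (c : ℝ) (t K : ℕ) (p' : ℤ),
      (∀ y : ℝ, (2:ℝ)^(t:ℕ) * ((2:ℝ)^k * y + c) = 2^(K:ℕ) * y + p') →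
      ∀ v : ℝ, Mf.F (H' v) = (2:ℝ)^k * (H' v) + c →
      (Mg.iter t).F (Ft v) = (Mg.iter K).F v + p' := by
    intro k c t K p' hrw v hFv
    have h1 : (Mg.iter t).F (Ft v) = H ((2:ℝ)^(t:ℕ) * Mf.F (H' v)) := Hiter t _
    have h2 : (2:ℝ)^(t:ℕ) * Mf.F (H' v) = 2^(K:ℕ) * (H' v) + (p' : ℝ) := by
      rw [hFv]; exact hrw _
    rw [h1, h2, perInt_one Hper p' ((2:ℝ)^(K:ℕ) * H' v)]
    rw [show H ((2:ℝ)^(K:ℕ) * H' v) = (Mg.iter K).F (H (H' v)) from (Hiter K _).symm, HH']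
  -- nice pieces
  have piece : ∀ (k : ℤ) (c : ℝ), c ∈ zpows 2 → ∀ α β : ℝ,
      (∀ y ∈ Set.Ioo α β, Mf.F y = (2:ℝ)^k * y + c) →
      ∃ S : Set ℝ, (∀ aa bb : ℝ, (S ∩ Set.Icc aa bb).Finite) ∧ S ⊆ zpows 2 ∧
        ∀ v, H' v ∈ Set.Ioo α β → v ∉ S → NiceAt Ft v := by
    intro k c hc α β hform
    obtain ⟨t, K, p', hrw⟩ := exists_tK k hc
    refine ⟨{v | H' v ∈ Set.Ioo α β ∧ (v ∈ (Mg.iter K).bad ∨ Ft v ∈ (Mg.iter t).bad)},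
      ?_, ?_, ?_⟩
    · intro aa bb
      refine Set.Finite.subset (((Mg.iter K).badFin aa bb).union
        ((locFin_preimage Ftmono (Mg.iter t).badFin) aa bb)) ?_
      rintro v ⟨⟨hv1, hv2 | hv3⟩, hvIcc⟩
      · exact Or.inl ⟨hv2, hvIcc⟩
      · exact Or.inr ⟨hv3, hvIcc⟩
    · rintro v ⟨hv1, hv2 | hv3⟩
      · exact (Mg.iter K).badZ hv2
      · have hid := core_id k c t K p' hrw v (hform _ hv1)
        have h1 : (Mg.iter t).F (Ft v) ∈ zpows 2 :=
          (Mg.iter t).mapsZ _ ((Mg.iter t).badZ hv3)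
        have h2 : (Mg.iter K).F v ∈ zpows 2 := by
          have h3 : (Mg.iter K).F v = (Mg.iter t).F (Ft v) - p' := by linarith
          rw [h3]
          exact Z_sub h1 (Z_int p')
        exact (Mg.iter K).preZ h2
    · intro v hv hvS
      simp only [Set.mem_setOf_eq, not_and, not_or] at hvS
      obtain ⟨h1, h2⟩ := hvS hv
      have hopen : IsOpen (H' ⁻¹' Set.Ioo α β) := IsOpen.preimage H'cont isOpen_Ioo
      obtain ⟨δ, hδ, hball⟩ := Metric.isOpen_iff.1 hopen v hv
      refine nice_transfer (Mg.iter t) (Mg.iter K) Ft p' hδ ?_ h1 h2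
      intro w hw
      have hwin : H' w ∈ Set.Ioo α β := hball (by rw [Metric.mem_ball, Real.dist_eq]; exact hw)
      exact core_id k c t K p' hrw w (hform _ hwin)
  -- local structure of Ft everywhere
  have local_nice : ∀ w : ℝ, ∃ δ > 0, ∃ S : Set ℝ, S.Finite ∧ S ⊆ zpows 2 ∧
      ∀ v, |v - w| < δ → v ∉ S → NiceAt Ft v := by
    intro w
    set x := H' w with hxdef
    have hwx : H x = w := by rw [hxdef]; exact HH' w
    have hSfin : ((Mf.bad ∩ Set.Icc (x-1) (x+1)) \ {x}).Finite := (Mf.badFin _ _).diff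
    have hxS : x ∉ (Mf.bad ∩ Set.Icc (x-1) (x+1)) \ {x} := fun hc => hc.2 rfl
    obtain ⟨ε₁, hε₁, havoid⟩ := finite_avoid hSfin hxS
    set ε₀ := min ε₁ 1 with hε₀def
    have hε₀ : 0 < ε₀ := lt_min hε₁ one_pos
    have hpunct : ∀ y, |y - x| < ε₀ → y ≠ x → y ∉ Mf.bad := by
      intro y hy hne hbadp
      have h1 : |y - x| < ε₁ := lt_of_lt_of_le hy (min_le_left _ _)
      have h2 : |y - x| < 1 := lt_of_lt_of_le hy (min_le_right _ _)
      have h3 := abs_lt.1 h2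
      refine havoid y h1 ⟨⟨hbadp, ?_, ?_⟩, ?_⟩
      · linarith [h3.1]
      · linarith [h3.2]
      · simpa using hne
    have contδ : ∀ ε : ℝ, 0 < ε → ∃ δ > 0, ∀ v, |v - w| < δ → |H' v - x| < ε := by
      intro ε hε
      obtain ⟨δ, hδ, hb⟩ := Metric.continuous_iff.1 H'cont w ε hε
      refine ⟨δ, hδ, fun v hv => ?_⟩
      have := hb v (by rw [Real.dist_eq]; exact hv)
      rw [Real.dist_eq] at this
      rwa [← hxdef] at this
    by_cases hxbad : x ∈ Mf.bad
    · have hrnice : ∀ y ∈ Set.Ioo x (x + ε₀), NiceAt Mf.F y := by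
        intro y hy
        refine Mf.nice y (hpunct y ?_ (ne_of_gt hy.1))
        rw [abs_of_pos (sub_pos.2 hy.1)]
        linarith [hy.2]
      obtain ⟨kr, cr, hcr, hformr⟩ := const_on_Ioo Mf.F (by linarith : x < x + ε₀) hrnice
      obtain ⟨Sr, hSrfin, hSrZ, hSrnice⟩ := piece kr cr hcr x (x+ε₀) hformr
      have hlnice : ∀ y ∈ Set.Ioo (x - ε₀) x, NiceAt Mf.F y := by
        intro y hy
        refine Mf.nice y (hpunct y ?_ (ne_of_lt hy.2))
        rw [abs_of_neg (sub_neg.2 hy.2)]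
        linarith [hy.1]
      obtain ⟨kl, cl, hcl, hforml⟩ := const_on_Ioo Mf.F (by linarith : x - ε₀ < x) hlnice
      obtain ⟨Sl', hSlfin, hSlZ', hSlnice⟩ := piece kl cl hcl (x-ε₀) x hforml
      obtain ⟨δ, hδ, hδball⟩ := contδ ε₀ hε₀
      refine ⟨δ, hδ, ({w} ∪ (Sr ∪ Sl')) ∩ Set.Icc (w-δ) (w+δ), ?_, ?_, ?_⟩
      · refine Set.Finite.subset ((Set.finite_singleton w).union
          ((hSrfin (w-δ) (w+δ)).union (hSlfin (w-δ) (w+δ)))) ?_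
        rintro v ⟨hv1 | (hv2 | hv3), hvIcc⟩
        · exact Or.inl hv1
        · exact Or.inr (Or.inl ⟨hv2, hvIcc⟩)
        · exact Or.inr (Or.inr ⟨hv3, hvIcc⟩)
      · rintro v ⟨hv1 | (hv2 | hv3), _⟩
        · rw [Set.mem_singleton_iff] at hv1
          rw [hv1, ← hwx]
          exact HZ x (Mf.badZ hxbad)
        · exact hSrZ hv2
        · exact hSlZ' hv3
      · intro v hvδ hvS
        have habs := abs_lt.1 hvδ
        have hvIcc : v ∈ Set.Icc (w-δ) (w+δ) := ⟨by linarith [habs.1], by linarith [habs.2]⟩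
        have hvnot : v ∉ ({w} ∪ (Sr ∪ Sl')) := fun hmem => hvS ⟨hmem, hvIcc⟩
        have hH'v : |H' v - x| < ε₀ := hδball v hvδ
        have habs2 := abs_lt.1 hH'v
        rcases lt_trichotomy (H' v) x with hlt | heq | hgt
        · refine hSlnice v ⟨by linarith [habs2.1], hlt⟩ ?_
          intro hvSl
          exact hvnot (Or.inr (Or.inr hvSl))
        · exfalso
          apply hvnot
          left
          have hveq : v = w := by
            calc v = H (H' v) := (HH' v).symm
              _ = H x := by rw [heq]
              _ = w := hwx
          rw [hveq]
          rfl
        · refine hSrnice v ⟨hgt, by linarith [habs2.2]⟩ ?_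
          intro hvSr
          exact hvnot (Or.inr (Or.inl hvSr))
    · obtain ⟨k₀, c₀, hc₀, ε₂, hε₂, hf₀⟩ := Mf.nice x hxbad
      obtain ⟨Sc, hScfin, hScZ, hScnice⟩ := piece k₀ c₀ hc₀ (x-ε₂) (x+ε₂)
        (fun y hy => hf₀ y (abs_lt.2 ⟨by linarith [hy.1], by linarith [hy.2]⟩))
      obtain ⟨δ, hδ, hδball⟩ := contδ ε₂ hε₂
      refine ⟨δ, hδ, Sc ∩ Set.Icc (w-δ) (w+δ), hScfin _ _, fun v hv => hScZ hv.1, ?_⟩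
      intro v hvδ hvS
      have habs := abs_lt.1 hvδ
      have hvIcc : v ∈ Set.Icc (w-δ) (w+δ) := ⟨by linarith [habs.1], by linarith [habs.2]⟩
      have hvnot : v ∉ Sc := fun hmem => hvS ⟨hmem, hvIcc⟩
      have hH'v := abs_lt.1 (hδball v hvδ)
      exact hScnice v ⟨by linarith [hH'v.1], by linarith [hH'v.2]⟩ hvnot
  -- global assembly
  set N := {v : ℝ | ¬ NiceAt Ft v} with hN
  choose δl hδl Sl hSlf hSlZ hSln using local_nice
  have NZ : N ⊆ zpows 2 := by
    intro v hv
    by_cases hvS : v ∈ Sl v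
    · exact hSlZ v hvS
    · exact absurd (hSln v v (by simpa using hδl v) hvS) hv
  have NPer : ∀ v ∈ N, v + 1 ∈ N ∧ v - 1 ∈ N := by
    intro v hv
    constructor
    · intro hnice
      have := niceAt_shift_down Ftper hnice
      rw [add_sub_cancel_right] at this
      exact hv this
    · intro hnice
      have := niceAt_shift_up Ftper hnice
      rw [sub_add_cancel] at this
      exact hv this
  have Nfin : (N ∩ Set.Ico (0:ℝ) 1).Finite := by
    obtain ⟨T, hT⟩ := (isCompact_Icc : IsCompact (Set.Icc (0:ℝ) 1)).elim_finite_subcover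
      (fun w : ℝ => Metric.ball w (δl w)) (fun w => Metric.isOpen_ball)
      (fun v _ => Set.mem_iUnion.2 ⟨v, Metric.mem_ball_self (hδl v)⟩)
    refine Set.Finite.subset (T.finite_toSet.biUnion fun w _ => hSlf w) ?_
    rintro v ⟨hvN, hv01⟩
    have hvIcc : v ∈ Set.Icc (0:ℝ) 1 := ⟨hv01.1, le_of_lt hv01.2⟩
    have := hT hvIcc
    rw [Set.mem_iUnion₂] at this
    obtain ⟨w, hwT, hvw⟩ := this
    refine Set.mem_biUnion hwT ?_
    by_contra hvS
    rw [Metric.mem_ball, Real.dist_eq] at hvw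
    exact hvN (hSln w v hvw hvS)
  -- assemble MemT
  refine ⟨Ft, ?_, ?_, Ftmono, Ftsurj, ⟨N, Nfin, NPer, NZ, ?_⟩, ?_⟩
  · intro x
    show h (f (h' _)) = _
    rw [h'lift, Flift, ← hMfF, Hlift]
  · intro v
    exact Ftper v
  · intro x hx
    have hnice : NiceAt Ft x := not_not.1 hx
    obtain ⟨k, c, hc, ε, hε, hfm⟩ := hnice
    refine ⟨k, c, ε, hε, fun y hy => ?_⟩
    rw [hfm y hy]
    norm_num
  · intro q hq
    by_cases hb : H' q ∈ Mf.bad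
    · show H (Mf.F (H' q)) ∈ zpows 2
      exact HZ _ (Mf.mapsZ _ (Mf.badZ hb))
    · obtain ⟨k, c, hc, ε, hε, hfm⟩ := Mf.nice _ hb
      obtain ⟨t, K, p', hrw⟩ := exists_tK k hc
      have hid := core_id k c t K p' hrw q (hfm _ (by simpa using hε))
      have h1 : (Mg.iter K).F q + (p':ℝ) ∈ zpows 2 :=
        Z_add ((Mg.iter K).mapsZ _ hq) (Z_int p')
      rw [← hid] at h1
      exact (Mg.iter t).preZ h1
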